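/- Let $M_i, M_j \in \mathbb{R}^{3\times 3}$ be positive semi-definite matrices of rank 2 whose kernels are both spanned by a unit vector $x \in \mathbb{R}^3$, let $\sigma > 0$, and let $y \in \mathbb{R}^3$ satisfy $x^T y > 0$. Then the $4 \times 4$ matrix $J = \begin{bmatrix} \sigma(M_i + M_j) & y \\ 2x^T & 0 \end{bmatrix}$ is non-singular. -/

import Mathlib

open Matrix

theorem stmt11 (Mi Mj : Matrix (Fin 3) (Fin 3) ℝ)
    (hMi : Mi.PosSemidef) (hMj : Mj.PosSemidef)
    (hMirank : Mi.rank = 2) (hMjrank : Mj.rank = 2)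
    (x : Fin 3 → ℝ) (hxunit : x ⬝ᵥ x = 1)
    (hkeri : LinearMap.ker Mi.mulVecLin = Submodule.span ℝ {x})
    (hkerj : LinearMap.ker Mj.mulVecLin = Submodule.span ℝ {x})
    (σ : ℝ) (hσ : 0 < σ)
    (y : Fin 3 → ℝ) (hy : 0 < x ⬝ᵥ y)
    (J : Matrix (Fin 3 ⊕ Fin 1) (Fin 3 ⊕ Fin 1) ℝ)
    (hJ : J = Matrix.fromBlocks (σ • (Mi + Mj)) (Matrix.replicateCol (Fin 1) y)
        (Matrix.replicateRow (Fin 1) ((2 : ℝ) • x)) 0) :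
    IsUnit J.det := by
  rw [isUnit_iff_ne_zero]
  intro hdet
  obtain ⟨v, hvne, hv0⟩ := (Matrix.exists_mulVec_eq_zero_iff).mpr hdet
  set v₁ : Fin 3 → ℝ := v ∘ Sum.inl with hv₁
  set t : ℝ := v (Sum.inr 0) with ht
  have hvelim : v = Sum.elim (v ∘ Sum.inl) (v ∘ Sum.inr) := by
    funext i; cases i <;> rfl
  rw [hJ, hvelim, Matrix.fromBlocks_mulVec] at hv0
  have h1 : (σ • (Mi + Mj)) *ᵥ v₁ + (Matrix.replicateCol (Fin 1) y) *ᵥ (v ∘ Sum.inr) = 0 := by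
    have := congrFun hv0 (Sum.inl 0)
    have := congrFun hv0 (Sum.inl 1)
    have := congrFun hv0 (Sum.inl 2)
    funext i
    fin_cases i <;> simpa using congrFun hv0 (Sum.inl _)
  have h2 : x ⬝ᵥ v₁ = 0 := by
    have h := congrFun hv0 (Sum.inr 0)
    simp only [Sum.elim_inr, Matrix.zero_mulVec, add_zero, Pi.zero_apply,
      Matrix.mulVec, dotProduct, Matrix.replicateRow_apply, Pi.smul_apply, smul_eq_mul] at h
    have h' : (2:ℝ) * (x ⬝ᵥ v₁) = 0 := by
      simpa [dotProduct, Finset.mul_sum, mul_assoc, hv₁] using h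
    linarith
  -- col y *ᵥ (v ∘ inr) = t • y
  have hcol : (Matrix.replicateCol (Fin 1) y) *ᵥ (v ∘ Sum.inr) = t • y := by
    funext i
    simp [Matrix.mulVec, dotProduct, Fin.sum_univ_one, mul_comm, ht]
  rw [hcol] at h1
  -- Mi x = 0 and Mj x = 0
  have hxmemi : x ∈ LinearMap.ker Mi.mulVecLin := by
    rw [hkeri]; exact Submodule.mem_span_singleton_self x
  have hxmemj : x ∈ LinearMap.ker Mj.mulVecLin := by
    rw [hkerj]; exact Submodule.mem_span_singleton_self x
  have hMix : Mi *ᵥ x = 0 := hxmemi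
  have hMjx : Mj *ᵥ x = 0 := hxmemj
  -- x ⬝ (Mi *ᵥ w) = 0 for any w, using symmetry
  have hsymm : ∀ (M : Matrix (Fin 3) (Fin 3) ℝ), M.PosSemidef → M *ᵥ x = 0 →
      ∀ w, x ⬝ᵥ (M *ᵥ w) = 0 := by
    intro M hM hMx w
    rw [dotProduct_mulVec, ← Matrix.mulVec_transpose]
    have hT : Mᵀ = M := by
      have := hM.1
      ext i j; simpa using this.apply i j
    rw [hT, hMx, zero_dotProduct]
  -- dot h1 with x
  have hdot : x ⬝ᵥ ((σ • (Mi + Mj)) *ᵥ v₁ + t • y) = 0 := by rw [h1, dotProduct_zero]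
  have ht0 : t = 0 := by
    rw [dotProduct_add, Matrix.smul_mulVec, dotProduct_smul,
      Matrix.add_mulVec, dotProduct_add, hsymm Mi hMi hMix v₁, hsymm Mj hMj hMjx v₁,
      dotProduct_smul] at hdot
    simp only [add_zero, zero_add, smul_eq_mul, mul_zero] at hdot
    have : t * (x ⬝ᵥ y) = 0 := by linarith
    rcases mul_eq_zero.mp this with h | h
    · exact h
    · exact absurd h (ne_of_gt hy)
  rw [ht0, zero_smul, add_zero] at h1
  -- so (Mi + Mj) v₁ = 0
  have hMM : (Mi + Mj) *ᵥ v₁ = 0 := by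
    have := h1
    rw [Matrix.smul_mulVec] at this
    have := smul_eq_zero.mp this
    rcases this with h | h
    · exact absurd h (ne_of_gt hσ)
    · exact h
  -- v₁ ⬝ (Mi+Mj) v₁ = 0, split
  have hquad : v₁ ⬝ᵥ (Mi *ᵥ v₁) + v₁ ⬝ᵥ (Mj *ᵥ v₁) = 0 := by
    have := congrArg (fun w => v₁ ⬝ᵥ w) hMM
    simpa [Matrix.add_mulVec, dotProduct_add] using this
  have hi0 : Mi *ᵥ v₁ = 0 := by
    have h1' := hMi.dotProduct_mulVec_nonneg v₁
    have h2' := hMj.dotProduct_mulVec_nonneg v₁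
    simp only [RCLike.star_def, star_trivial] at h1' h2'
    have : v₁ ⬝ᵥ (Mi *ᵥ v₁) = 0 := le_antisymm (by linarith) h1'
    exact (hMi.dotProduct_mulVec_zero_iff v₁).mp (by simpa using this)
  -- v₁ ∈ ker Mi = span {x}
  have hvspan : v₁ ∈ Submodule.span ℝ ({x} : Set (Fin 3 → ℝ)) := by
    rw [← hkeri]; exact hi0
  obtain ⟨c, hc⟩ := Submodule.mem_span_singleton.mp hvspan
  -- x ⬝ v₁ = 0 gives c = 0
  have hc0 : c = 0 := by
    have := h2
    rw [← hc, dotProduct_smul, smul_eq_mul, hxunit, mul_one] at this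
    exact this
  have hv₁0 : v₁ = 0 := by rw [← hc, hc0, zero_smul]
  apply hvne
  funext i
  cases i with
  | inl i => exact congrFun hv₁0 i
  | inr i => rw [Fin.fin_one_eq_zero i]; exact ht0
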